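/- arXiv:1809.06023 — 3 statements merged into one kernel-verified Lean document; each statement's English description precedes it below -/
import Mathlib

section
/- Let R > 0 and 0 < ε < R. Let A be a real random variable uniformly distributed on [−R, R], let Z be a random variable with values in a measurable space, and let Â = g(Z) for a measurable function g. Define the mutual information I(A; Z) := D(ℙ_{(A,Z)} ‖ ℙ_A ⊗ ℙ_Z) / log 2 (i.e., the Kullback–Leibler divergence between the joint law of (A, Z) and the product of the marginal laws, measured in bits). Then ℙ( |Â − A| < ε ) ≤ ( I(A; Z) + 1 ) / log₂(R/ε). -/
open MeasureTheory ProbabilityTheory Finset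

open scoped Classical in
/-- The Kullback–Leibler divergence `D(μ ‖ ν)` (in nats, valued in `ℝ≥0∞`):
the integral of the log-likelihood ratio if `μ ≪ ν` and the ratio is integrable,
and `∞` otherwise. -/
noncomputable def klDivergence {α : Type*} [MeasurableSpace α] (μ ν : Measure α) : ENNReal :=
  if μ ≪ ν ∧ Integrable (llr μ ν) μ then ENNReal.ofReal (∫ x, llr μ ν x ∂μ) else ⊤

/-- Binary entropy is at most `log 2`. -/
lemma aux_entropy {p : ℝ} (h0 : 0 < p) (h1 : p < 1) :
    -Real.log 2 ≤ p * Real.log p + (1 - p) * Real.log (1 - p) := by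
  have h2p : (0:ℝ) < 2 * p := by linarith
  have h2q : (0:ℝ) < 2 * (1 - p) := by linarith
  have l1 : 1 - (2*p)⁻¹ ≤ Real.log (2*p) := by
    have := Real.log_le_sub_one_of_pos (inv_pos.mpr h2p)
    rw [Real.log_inv] at this
    linarith
  have l2 : 1 - (2*(1-p))⁻¹ ≤ Real.log (2*(1-p)) := by
    have := Real.log_le_sub_one_of_pos (inv_pos.mpr h2q)
    rw [Real.log_inv] at this
    linarith
  have e1 : Real.log (2*p) = Real.log 2 + Real.log p :=
    Real.log_mul two_ne_zero (ne_of_gt h0)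
  have e2 : Real.log (2*(1-p)) = Real.log 2 + Real.log (1-p) :=
    Real.log_mul two_ne_zero (by linarith)
  have m1 : p * (1 - (2*p)⁻¹) ≤ p * (Real.log 2 + Real.log p) := by
    rw [← e1]; exact mul_le_mul_of_nonneg_left l1 h0.le
  have m2 : (1-p) * (1 - (2*(1-p))⁻¹) ≤ (1-p) * (Real.log 2 + Real.log (1-p)) := by
    rw [← e2]; exact mul_le_mul_of_nonneg_left l2 (by linarith)
  have c1 : p * (2*p)⁻¹ = 1/2 := by
    field_simp
  have c2 : (1-p) * (2*(1-p))⁻¹ = 1/2 := by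
    have : (1:ℝ) - p ≠ 0 := by linarith
    field_simp
  nlinarith [m1, m2]

/-- Every `y : ℝ≥0∞` satisfies `y * ofReal (y.toReal)⁻¹ ≤ 1`. -/
lemma aux_mul_inv_toReal_le_one (y : ENNReal) : y * ENNReal.ofReal (y.toReal)⁻¹ ≤ 1 := by
  rcases eq_or_ne y ⊤ with rfl | hy
  · simp
  rcases eq_or_ne y 0 with rfl | hy0
  · simp
  have h : ENNReal.ofReal (y.toReal)⁻¹ = y⁻¹ := by
    rw [ENNReal.ofReal_inv_of_pos (ENNReal.toReal_pos hy0 hy), ENNReal.ofReal_toReal hy]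
  rw [h, ENNReal.mul_inv_cancel hy0 hy]

/-- Log-sum inequality for a restricted set: `μ(S) log (μ(S)/ν(S)) ≤ ∫_S llr μ ν dμ`. -/
lemma aux_logsum {α : Type*} [MeasurableSpace α] (μ ν : Measure α)
    [IsFiniteMeasure μ] [IsFiniteMeasure ν]
    (hμν : μ ≪ ν) (h_int : Integrable (llr μ ν) μ)
    {S : Set α} (hS : MeasurableSet S) :
    (μ S).toReal * Real.log ((μ S).toReal / (ν S).toReal) ≤ ∫ x in S, llr μ ν x ∂μ := by
  by_cases hp0 : μ S = 0
  · rw [hp0, Measure.restrict_eq_zero.mpr hp0]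
    simp
  have hq0 : ν S ≠ 0 := fun h => hp0 (hμν h)
  set p := (μ S).toReal with hp
  set q := (ν S).toReal with hq
  have hpp : 0 < p := ENNReal.toReal_pos hp0 (measure_ne_top _ _)
  have hqp : 0 < q := ENNReal.toReal_pos hq0 (measure_ne_top _ _)
  set c := p / q with hc
  have hcp : 0 < c := div_pos hpp hqp
  set F : α → ℝ := fun x => (μ.rnDeriv ν x).toReal with hF
  have hmeasF : Measurable F := (μ.measurable_rnDeriv ν).ennreal_toReal
  have hmeasG : Measurable fun x => (F x)⁻¹ := hmeasF.inv
  have hmeasG' : Measurable fun x => ENNReal.ofReal (F x)⁻¹ :=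
    ENNReal.measurable_ofReal.comp hmeasG
  -- key lintegral bound
  have key : ∫⁻ x in S, ENNReal.ofReal (F x)⁻¹ ∂μ ≤ ν S := by
    conv_lhs => rw [← Measure.withDensity_rnDeriv_eq μ ν hμν]
    rw [restrict_withDensity hS,
      lintegral_withDensity_eq_lintegral_mul _ (μ.measurable_rnDeriv ν)
        hmeasG']
    calc ∫⁻ x in S, (μ.rnDeriv ν * fun x => ENNReal.ofReal (F x)⁻¹) x ∂ν
        ≤ ∫⁻ _ in S, 1 ∂ν := by
          refine lintegral_mono fun x => ?_
          exact aux_mul_inv_toReal_le_one (μ.rnDeriv ν x)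
      _ = ν S := by simp
  have hGnonneg : (0:α → ℝ) ≤ fun x => (F x)⁻¹ := fun x => by positivity
  have hGint : IntegrableOn (fun x => (F x)⁻¹) S μ := by
    refine ⟨hmeasG.aestronglyMeasurable, ?_⟩
    rw [hasFiniteIntegral_iff_ofReal (ae_of_all _ fun x => hGnonneg x)]
    exact lt_of_le_of_lt key (measure_lt_top ν S)
  have hGle : ∫ x in S, (F x)⁻¹ ∂μ ≤ q := by
    rw [integral_eq_lintegral_of_nonneg_ae (ae_of_all _ fun x => hGnonneg x)
      hmeasG.aestronglyMeasurable]
    exact ENNReal.toReal_mono (measure_ne_top _ _) key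
  -- pointwise a.e. bound
  have hae : ∀ᵐ x ∂(μ.restrict S),
      1 + Real.log c - c * (F x)⁻¹ ≤ llr μ ν x := by
    refine ae_restrict_of_ae ?_
    filter_upwards [Measure.rnDeriv_pos hμν, hμν.ae_le (Measure.rnDeriv_lt_top μ ν)]
      with x h1 h2
    have hFx : 0 < F x := ENNReal.toReal_pos h1.ne' h2.ne
    have hl : Real.log (c / F x) ≤ c / F x - 1 :=
      Real.log_le_sub_one_of_pos (div_pos hcp hFx)
    rw [Real.log_div (ne_of_gt hcp) (ne_of_gt hFx), div_eq_mul_inv] at hl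
    have : llr μ ν x = Real.log (F x) := rfl
    linarith
  have hint1 : Integrable (fun x => 1 + Real.log c - c * (F x)⁻¹) (μ.restrict S) :=
    (integrable_const _).sub (hGint.const_mul c)
  have hmono := integral_mono_ae hint1 (h_int.integrableOn) hae
  rw [integral_sub (integrable_const _) (hGint.const_mul c), setIntegral_const,
    integral_const_mul, smul_eq_mul, measureReal_def, ← hp] at hmono
  have hcq : c * q = p := div_mul_cancel₀ p (ne_of_gt hqp)
  have hGle' : c * ∫ x in S, (F x)⁻¹ ∂μ ≤ c * q := mul_le_mul_of_nonneg_left hGle hcp.le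
  nlinarith [hmono, hGle', hcq]

/-- Information-theoretic converse (Fano-type) bound, Theorem 2 of the paper: if `A` is
uniform on `[−R, R]` and `Â = g(Z)` is any estimator built from an observation `Z`, then
`ℙ(|Â − A| < ε) ≤ (I(A;Z) + 1) / log₂(R/ε)`, where the mutual information (in bits) is
`I(A;Z) = D(ℙ_{(A,Z)} ‖ ℙ_A ⊗ ℙ_Z) / log 2`. -/
theorem fano_converse_deception_bound
    {Ω 𝒵 : Type*} [MeasurableSpace Ω] [MeasurableSpace 𝒵]
    (P : Measure Ω) [IsProbabilityMeasure P]
    (R ε : ℝ) (hR : 0 < R) (hε : 0 < ε) (hεR : ε < R)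
    (A : Ω → ℝ) (Z : Ω → 𝒵) (g : 𝒵 → ℝ)
    (hA : Measurable A) (hZ : Measurable Z) (hg : Measurable g)
    -- `A` is uniformly distributed on `[−R, R]`
    (hunif : Measure.map A P
      = (ENNReal.ofReal (2 * R))⁻¹ • (volume.restrict (Set.Icc (-R) R))) :
    P {ω | |g (Z ω) - A ω| < ε}
      ≤ (klDivergence (Measure.map (fun ω => (A ω, Z ω)) P)
            ((Measure.map A P).prod (Measure.map Z P)) / ENNReal.ofReal (Real.log 2) + 1)
          / ENNReal.ofReal (Real.logb 2 (R / ε)) := by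
  classical
  set μ : Measure (ℝ × 𝒵) := Measure.map (fun ω => (A ω, Z ω)) P with hμdef
  set ν : Measure (ℝ × 𝒵) := (Measure.map A P).prod (Measure.map Z P) with hνdef
  haveI : IsProbabilityMeasure μ :=
    Measure.isProbabilityMeasure_map ((hA.prodMk hZ).aemeasurable)
  haveI : IsProbabilityMeasure (Measure.map A P) := Measure.isProbabilityMeasure_map hA.aemeasurable
  haveI : IsProbabilityMeasure (Measure.map Z P) := Measure.isProbabilityMeasure_map hZ.aemeasurable
  haveI : IsProbabilityMeasure ν := by rw [hνdef]; infer_instance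
  set E : Set (ℝ × 𝒵) := {p | |g p.2 - p.1| < ε} with hEdef
  have hE : MeasurableSet E :=
    measurableSet_lt ((hg.comp measurable_snd).sub measurable_fst).abs measurable_const
  have hPE : P {ω | |g (Z ω) - A ω| < ε} = μ E := by
    rw [hμdef, Measure.map_apply (hA.prodMk hZ) hE]
    rfl
  -- logb 2 (R/ε) and log 2 positivity
  have hlog2 : 0 < Real.log 2 := Real.log_pos one_lt_two
  have hL : 0 < Real.log (R / ε) := Real.log_pos ((one_lt_div hε).mpr hεR)
  -- bound on ν E
  have hνE : ν E ≤ ENNReal.ofReal (ε / R) := by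
    rw [hνdef, Measure.prod_apply_symm hE]
    have hslice : ∀ z : 𝒵,
        (Measure.map A P) ((fun a => (a, z)) ⁻¹' E) ≤ ENNReal.ofReal (ε / R) := by
      intro z
      have hset : ((fun a : ℝ => (a, z)) ⁻¹' E) = Set.Ioo (g z - ε) (g z + ε) := by
        ext a
        simp only [hEdef, Set.mem_preimage, Set.mem_setOf_eq, Set.mem_Ioo, abs_lt]
        constructor
        · rintro ⟨h1, h2⟩; constructor <;> linarith
        · rintro ⟨h1, h2⟩; constructor <;> linarith
      rw [hset, hunif, Measure.smul_apply, smul_eq_mul,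
        Measure.restrict_apply measurableSet_Ioo]
      calc (ENNReal.ofReal (2*R))⁻¹ * volume (Set.Ioo (g z - ε) (g z + ε) ∩ Set.Icc (-R) R)
          ≤ (ENNReal.ofReal (2*R))⁻¹ * volume (Set.Ioo (g z - ε) (g z + ε)) := by
            gcongr
            exact Set.inter_subset_left
        _ = (ENNReal.ofReal (2*R))⁻¹ * ENNReal.ofReal (2*ε) := by
            rw [Real.volume_Ioo]
            congr 1
            ring
        _ = ENNReal.ofReal (ε / R) := by
            rw [show ε / R = 2*ε / (2*R) by field_simp,
              ENNReal.ofReal_div_of_pos (by linarith : (0:ℝ) < 2*R), div_eq_mul_inv,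
              mul_comm]
    calc ∫⁻ z, (Measure.map A P) ((fun a => (a, z)) ⁻¹' E) ∂(Measure.map Z P)
        ≤ ∫⁻ _, ENNReal.ofReal (ε / R) ∂(Measure.map Z P) := lintegral_mono hslice
      _ = ENNReal.ofReal (ε / R) := by simp
  rw [hPE, klDivergence]
  split_ifs with h
  · -- finite KL case
    obtain ⟨hac, hint⟩ := h
    set k := ∫ x, llr μ ν x ∂μ with hk
    have hk0 : 0 ≤ k := by
      have := aux_logsum μ ν hac hint MeasurableSet.univ
      simpa [measure_univ] using this
    set pE := (μ E).toReal with hpE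
    have hμEc : (μ Eᶜ).toReal = 1 - pE := by
      rw [prob_compl_eq_one_sub hE,
        ENNReal.toReal_sub_of_le prob_le_one ENNReal.one_ne_top, ENNReal.toReal_one]
    have hsplit : ∫ x in E, llr μ ν x ∂μ + ∫ x in Eᶜ, llr μ ν x ∂μ = k :=
      integral_add_compl hE hint
    have hbound1 := aux_logsum μ ν hac hint hE
    have hbound2 := aux_logsum μ ν hac hint hE.compl
    have hp1 : pE ≤ 1 := by
      simpa using ENNReal.toReal_mono ENNReal.one_ne_top (prob_le_one (μ := μ) (s := E))
    -- main real inequality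
    have hmain : pE * Real.log (R / ε) ≤ k + Real.log 2 := by
      by_cases hp0 : μ E = 0
      · rw [hpE, hp0]
        simp only [ENNReal.toReal_zero, zero_mul]
        linarith
      have hppos : 0 < pE := ENNReal.toReal_pos hp0 (measure_ne_top _ _)
      have hνE0 : ν E ≠ 0 := fun hh => hp0 (hac hh)
      have hqpos : 0 < (ν E).toReal := ENNReal.toReal_pos hνE0 (measure_ne_top _ _)
      have hqle : (ν E).toReal ≤ ε / R := by
        calc (ν E).toReal ≤ (ENNReal.ofReal (ε / R)).toReal :=
              ENNReal.toReal_mono ENNReal.ofReal_ne_top hνE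
          _ = ε / R := ENNReal.toReal_ofReal (by positivity)
      have hlogq : Real.log ((ν E).toReal) ≤ -Real.log (R / ε) := by
        calc Real.log ((ν E).toReal) ≤ Real.log (ε / R) := Real.log_le_log hqpos hqle
          _ = -Real.log (R / ε) := by rw [← Real.log_inv, inv_div]
      by_cases hpe1 : pE = 1
      · -- estimator is a.s. within ε
        have h2' : (0:ℝ) ≤ ∫ x in Eᶜ, llr μ ν x ∂μ := by
          have := hbound2
          rw [hμEc, hpe1] at this
          simpa using this
        have h1' := hbound1
        rw [← hpE, hpe1, one_mul] at h1'
        have hgt : Real.log (R / ε) ≤ Real.log (1 / (ν E).toReal) := by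
          rw [one_div, Real.log_inv]; linarith
        rw [hpe1, one_mul]
        linarith
      · have hp1' : pE < 1 := lt_of_le_of_ne hp1 hpe1
        have hb1 : pE * Real.log pE + pE * Real.log (R / ε) ≤ ∫ x in E, llr μ ν x ∂μ := by
          have hd : Real.log (pE / (ν E).toReal)
              = Real.log pE - Real.log ((ν E).toReal) :=
            Real.log_div (ne_of_gt hppos) (ne_of_gt hqpos)
          rw [← hpE, hd] at hbound1
          nlinarith [mul_le_mul_of_nonneg_left hlogq hppos.le]
        have hμEcne : μ Eᶜ ≠ 0 := by
          intro hh
          rw [hh] at hμEc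
          simp only [ENNReal.toReal_zero] at hμEc
          exact hpe1 (by linarith)
        have hνEc0 : ν Eᶜ ≠ 0 := fun hh => hμEcne (hac hh)
        have hq'pos : 0 < (ν Eᶜ).toReal := ENNReal.toReal_pos hνEc0 (measure_ne_top _ _)
        have hq'le : (ν Eᶜ).toReal ≤ 1 := by
          simpa using ENNReal.toReal_mono ENNReal.one_ne_top (prob_le_one (μ := ν) (s := Eᶜ))
        have hlogq' : Real.log ((ν Eᶜ).toReal) ≤ 0 := Real.log_nonpos hq'pos.le hq'le
        have hb2 : (1 - pE) * Real.log (1 - pE) ≤ ∫ x in Eᶜ, llr μ ν x ∂μ := by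
          have hd : Real.log ((1 - pE) / (ν Eᶜ).toReal)
              = Real.log (1 - pE) - Real.log ((ν Eᶜ).toReal) :=
            Real.log_div (by linarith) (ne_of_gt hq'pos)
          rw [hμEc, hd] at hbound2
          nlinarith [mul_le_mul_of_nonneg_left hlogq' (by linarith : (0:ℝ) ≤ 1 - pE)]
        have hent := aux_entropy hppos hp1'
        linarith
    -- convert to ENNReal
    have hμEeq : μ E = ENNReal.ofReal pE := (ENNReal.ofReal_toReal (measure_ne_top μ E)).symm
    rw [hμEeq]
    have e1 : ENNReal.ofReal k / ENNReal.ofReal (Real.log 2)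
        = ENNReal.ofReal (k / Real.log 2) := (ENNReal.ofReal_div_of_pos hlog2).symm
    have e2 : ENNReal.ofReal (k / Real.log 2) + 1
        = ENNReal.ofReal (k / Real.log 2 + 1) := by
      rw [ENNReal.ofReal_add (by positivity) zero_le_one, ENNReal.ofReal_one]
    have e3 : ENNReal.ofReal (Real.logb 2 (R / ε))
        = ENNReal.ofReal (Real.log (R / ε) / Real.log 2) := by rw [Real.logb]
    have e4 : ENNReal.ofReal (k / Real.log 2 + 1)
          / ENNReal.ofReal (Real.log (R / ε) / Real.log 2)
        = ENNReal.ofReal ((k / Real.log 2 + 1) / (Real.log (R / ε) / Real.log 2)) :=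
      (ENNReal.ofReal_div_of_pos (by positivity)).symm
    rw [e1, e2, e3, e4]
    apply ENNReal.ofReal_le_ofReal
    have heq : (k / Real.log 2 + 1) / (Real.log (R / ε) / Real.log 2)
        = (k + Real.log 2) / Real.log (R / ε) := by
      field_simp
    rw [heq, le_div_iff₀ hL]
    linarith
  · -- infinite KL case: right-hand side is ⊤
    rw [ENNReal.top_div_of_ne_top ENNReal.ofReal_ne_top, top_add,
      ENNReal.top_div_of_ne_top ENNReal.ofReal_ne_top]
    exact le_top
end

section
/- Let n ≥ 1, L ≥ 2, ζ > 0, let A be a real n×n matrix, and let (x_k), (u_k), (w_k) be sequences in ℝⁿ satisfying x_{k+1} = A·x_k + u_k + w_k for all 1 ≤ k ≤ L−1. Let G := ∑_{k=1}^{L−1} x_k x_kᵀ and suppose G − ζ·L·I is positive semidefinite (where I is the n×n identity). Then G is invertible, and the least-squares estimate Â := (∑_{k=1}^{L−1} (x_{k+1} − u_k)·x_kᵀ)·G⁻¹ satisfies ‖Â − A‖_op ≤ (1/(ζ·L))·∑_{k=1}^{L−1} ‖w_k x_kᵀ‖_op, where ‖·‖_op denotes the operator norm on real n×n matrices induced by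 the Euclidean norm on ℝⁿ. -/
open Finset Matrix
open scoped Matrix.Norms.L2Operator

lemma mul_vecMulVec {n : ℕ} (A : Matrix (Fin n) (Fin n) ℝ) (v w : Fin n → ℝ) :
    A * vecMulVec v w = vecMulVec (A *ᵥ v) w := by
  ext i j
  simp [vecMulVec_apply, Matrix.mul_apply, Matrix.mulVec, dotProduct, Finset.sum_mul, mul_assoc]

lemma vecMulVec_add_left {n : ℕ} (v v' w : Fin n → ℝ) :
    vecMulVec (v + v') w = vecMulVec v w + vecMulVec v' w := by
  ext i j
  simp [vecMulVec_apply, add_mul]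

lemma inv_norm_le {n : ℕ} (c : ℝ) (hc : 0 < c) (G : Matrix (Fin n) (Fin n) ℝ)
    (h : (G - c • (1 : Matrix (Fin n) (Fin n) ℝ)).PosSemidef) (hG : IsUnit G) :
    ‖G⁻¹‖ ≤ 1 / c := by
  have key : ∀ z : EuclideanSpace ℝ (Fin n), c * ‖z‖ ≤ ‖toEuclideanLin G z‖ := by
    intro z
    have h0 := h.dotProduct_mulVec_nonneg ((WithLp.equiv 2 (Fin n → ℝ)) z)
    have hdot : (WithLp.equiv 2 (Fin n → ℝ)) z ⬝ᵥ (WithLp.equiv 2 (Fin n → ℝ)) z = ‖z‖ ^ 2 := by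
      rw [← real_inner_self_eq_norm_sq]
      rfl
    have hinner : (WithLp.equiv 2 (Fin n → ℝ)) z ⬝ᵥ (G *ᵥ (WithLp.equiv 2 (Fin n → ℝ)) z)
        = inner ℝ z (toEuclideanLin G z) := by
      simp [PiLp.inner_apply, Matrix.toEuclideanLin_apply, dotProduct, mul_comm]
    have h1 : c * ‖z‖ ^ 2 ≤ inner ℝ z (toEuclideanLin G z) := by
      rw [← hinner]
      have : (WithLp.equiv 2 (Fin n → ℝ)) z ⬝ᵥ ((G - c • 1) *ᵥ (WithLp.equiv 2 (Fin n → ℝ)) z)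
          = (WithLp.equiv 2 (Fin n → ℝ)) z ⬝ᵥ (G *ᵥ (WithLp.equiv 2 (Fin n → ℝ)) z)
            - c * ((WithLp.equiv 2 (Fin n → ℝ)) z ⬝ᵥ (WithLp.equiv 2 (Fin n → ℝ)) z) := by
        simp [Matrix.sub_mulVec, Matrix.smul_mulVec, dotProduct_sub, dotProduct_smul]
      have h0' : (0:ℝ) ≤ (WithLp.equiv 2 (Fin n → ℝ)) z ⬝ᵥ ((G - c • 1) *ᵥ (WithLp.equiv 2 (Fin n → ℝ)) z) := by
        simpa [star] using h0
      rw [this] at h0'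
      rw [hdot] at h0'
      linarith
    have h2 : (inner ℝ z (toEuclideanLin G z) : ℝ) ≤ ‖z‖ * ‖toEuclideanLin G z‖ :=
      real_inner_le_norm _ _
    rcases eq_or_ne (‖z‖) 0 with hz | hz
    · rw [hz]; simp [norm_nonneg]
    · have hzpos : 0 < ‖z‖ := lt_of_le_of_ne (norm_nonneg _) (Ne.symm hz)
      nlinarith
  rw [Matrix.l2_opNorm_def]
  apply ContinuousLinearMap.opNorm_le_bound _ (by positivity)
  intro y
  have hGG : G * G⁻¹ = 1 := Matrix.mul_nonsing_inv G ((Matrix.isUnit_iff_isUnit_det G).mp hG)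
  have hy : toEuclideanLin G (toEuclideanLin G⁻¹ y) = y := by
    have := congrArg (fun M => toEuclideanLin M y) hGG
    simpa [_root_.map_mul, Matrix.toEuclideanLin_apply, Matrix.mulVec_mulVec] using this
  have := key (toEuclideanLin G⁻¹ y)
  rw [hy] at this
  have : ‖toEuclideanLin G⁻¹ y‖ ≤ (1/c) * ‖y‖ := by
    rw [div_mul_eq_mul_div, le_div_iff₀ hc]
    linarith
  simpa using this

/-- Lemma 3 of the paper: under the realized persistent-excitation condition
`G = ∑_{k=1}^{L−1} x_k x_kᵀ ⪰ ζ·L·I`, the Gramian `G` is invertible and the least-squares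
estimate `Â = (∑_k (x_{k+1} − u_k) x_kᵀ)·G⁻¹` of the open-loop gain matrix `A` of the
vector plant `x_{k+1} = A x_k + u_k + w_k` satisfies
`‖Â − A‖ ≤ (1/(ζL))·∑_k ‖w_k x_kᵀ‖` in the Euclidean-induced operator norm. -/
theorem ls_estimation_error_bound_vector
    (n L : ℕ) (hn : 1 ≤ n) (hL : 2 ≤ L) (ζ : ℝ) (hζ : 0 < ζ)
    (A : Matrix (Fin n) (Fin n) ℝ) (x u w : ℕ → Fin n → ℝ)
    (hdyn : ∀ k, 1 ≤ k → k ≤ L - 1 → x (k + 1) = A *ᵥ x k + u k + w k)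
    (hPE : (((∑ k ∈ Icc 1 (L - 1), vecMulVec (x k) (x k))
        - (ζ * L) • (1 : Matrix (Fin n) (Fin n) ℝ))).PosSemidef) :
    IsUnit (∑ k ∈ Icc 1 (L - 1), vecMulVec (x k) (x k))
      ∧ ‖(∑ k ∈ Icc 1 (L - 1), vecMulVec (x (k + 1) - u k) (x k))
            * (∑ k ∈ Icc 1 (L - 1), vecMulVec (x k) (x k))⁻¹ - A‖
          ≤ (1 / (ζ * L)) * ∑ k ∈ Icc 1 (L - 1), ‖vecMulVec (w k) (x k)‖ := by
  haveI : Nonempty (Fin n) := ⟨⟨0, hn⟩⟩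
  set G := ∑ k ∈ Icc 1 (L - 1), vecMulVec (x k) (x k) with hGdef
  set S := ∑ k ∈ Icc 1 (L - 1), vecMulVec (w k) (x k) with hSdef
  have hc : (0:ℝ) < ζ * L := by
    have h2 : (0:ℝ) < (L:ℝ) := by
      have : (2:ℝ) ≤ (L:ℝ) := by exact_mod_cast hL
      linarith
    positivity
  have hone : ((ζ * L) • (1 : Matrix (Fin n) (Fin n) ℝ)).PosDef := by
    rw [Matrix.smul_one_eq_diagonal]
    exact (Matrix.posDef_diagonal_iff).mpr (fun _ => hc)
  have hGpd : G.PosDef := by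
    have := Matrix.PosDef.posSemidef_add hPE hone
    simpa using this
  have hGunit : IsUnit G := hGpd.isUnit
  refine ⟨hGunit, ?_⟩
  have hsum : (∑ k ∈ Icc 1 (L - 1), vecMulVec (x (k + 1) - u k) (x k)) = A * G + S := by
    rw [hGdef, hSdef, Finset.mul_sum, ← Finset.sum_add_distrib]
    apply Finset.sum_congr rfl
    intro k hk
    rw [Finset.mem_Icc] at hk
    rw [hdyn k hk.1 hk.2]
    have : A *ᵥ x k + u k + w k - u k = (A *ᵥ x k) + w k := by abel
    rw [this, vecMulVec_add_left, mul_vecMulVec]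
  have hGG : G * G⁻¹ = 1 := Matrix.mul_nonsing_inv G ((Matrix.isUnit_iff_isUnit_det G).mp hGunit)
  have hdiff : (∑ k ∈ Icc 1 (L - 1), vecMulVec (x (k + 1) - u k) (x k)) * G⁻¹ - A = S * G⁻¹ := by
    rw [hsum, add_mul, mul_assoc, hGG, mul_one]
    abel
  rw [hdiff]
  have hinv : ‖G⁻¹‖ ≤ 1 / (ζ * L) := inv_norm_le (ζ * L) hc G hPE hGunit
  have hS : ‖S‖ ≤ ∑ k ∈ Icc 1 (L - 1), ‖vecMulVec (w k) (x k)‖ := norm_sum_le _ _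
  calc ‖S * G⁻¹‖ ≤ ‖S‖ * ‖G⁻¹‖ := Matrix.l2_opNorm_mul S G⁻¹
    _ ≤ (∑ k ∈ Icc 1 (L - 1), ‖vecMulVec (w k) (x k)‖) * (1 / (ζ * L)) :=
        mul_le_mul hS hinv (norm_nonneg _) (le_trans (norm_nonneg _) hS)
    _ = (1 / (ζ * L)) * ∑ k ∈ Icc 1 (L - 1), ‖vecMulVec (w k) (x k)‖ := mul_comm _ _
end

section
/- Let n ≥ 1, L ≥ 2, ζ > 0, ε > 0, let A be a real n×n matrix, and on a probability space let (X_k), (U_k), (W_k) be ℝⁿ-valued random sequences satisfying X_{k+1} = A·X_k + U_k + W_k almost surely for all 1 ≤ k ≤ L−1. Let G := ∑_{k=1}^{L−1} X_k X_kᵀ and define the least-squares estimator Â := (∑_{k=1}^{L−1} (X_{k+1} − U_k)·X_kᵀ)·G⁻¹ whenever det(G) ≠ 0, and Â := 0 (the zero matrix) otherwise. Then, with ‖·‖_op the operator norm on real n×n matrices induced by the Euclidean norm on ℝⁿ, ℙ( ‖Â − A‖_op < ε ) ≥ ℙ( {G − ζ·L·I is positive semidefinite} ∩ {(1/(ζ·L))·∑_{k=1}^{L−1}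 ‖W_k X_kᵀ‖_op < ε} ). -/
open MeasureTheory Finset Matrix
open scoped Matrix.Norms.L2Operator RealInnerProductSpace

lemma vecMulVec_mulVec_left {n : ℕ} (A : Matrix (Fin n) (Fin n) ℝ) (x y : Fin n → ℝ) :
    vecMulVec (A *ᵥ x) y = A * vecMulVec x y := by
  ext i j
  simp [vecMulVec_apply, mulVec, dotProduct, mul_apply, Finset.sum_mul, mul_assoc]

lemma vecMulVec_add_left_s14 {n : ℕ} (x y z : Fin n → ℝ) :
    vecMulVec (x + y) z = vecMulVec x z + vecMulVec y z := by
  ext i j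
  simp [vecMulVec_apply, add_mul]

lemma inv_opNorm_le_of_shift_psd {n : ℕ} {M : Matrix (Fin n) (Fin n) ℝ} {c : ℝ} (hc : 0 < c)
    (h : (M - c • (1 : Matrix (Fin n) (Fin n) ℝ)).PosSemidef) :
    M.PosDef ∧ ‖M⁻¹‖ ≤ 1 / c := by
  have hone : ((c • 1 : Matrix (Fin n) (Fin n) ℝ)).PosDef := by
    have : (c • (1 : Matrix (Fin n) (Fin n) ℝ)) = diagonal (fun _ => c) := by
      simp [Matrix.smul_one_eq_diagonal]
    rw [this, posDef_diagonal_iff]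
    exact fun _ => hc
  have hM : M.PosDef := by
    have := Matrix.PosDef.posSemidef_add h hone
    simpa using this
  refine ⟨hM, ?_⟩
  rw [Matrix.l2_opNorm_def]
  apply ContinuousLinearMap.opNorm_le_bound _ (by positivity)
  intro x
  set z : Fin n → ℝ := M⁻¹ *ᵥ (WithLp.equiv 2 _ x) with hz
  set y : EuclideanSpace ℝ (Fin n) := (WithLp.equiv 2 _).symm z with hy
  have hMy : M *ᵥ z = WithLp.equiv 2 _ x := by
    rw [hz, Matrix.mulVec_mulVec, Matrix.mul_nonsing_inv _ hM.det_pos.ne'.isUnit,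
      Matrix.one_mulVec]
  have key : c * (‖y‖ * ‖y‖) ≤ ‖y‖ * ‖x‖ := by
    have hpsd := h.dotProduct_mulVec_nonneg z
    have hq : star z ⬝ᵥ ((M - c • 1) *ᵥ z) = ⟪y, x⟫ - c * ⟪y, y⟫ := by
      rw [Matrix.sub_mulVec, dotProduct_sub]
      congr 1
      · rw [EuclideanSpace.inner_eq_star_dotProduct]
        simp [hy, hMy, dotProduct_comm]
      · rw [Matrix.smul_mulVec, Matrix.one_mulVec, dotProduct_smul,
          EuclideanSpace.inner_eq_star_dotProduct]
        simp [hy, smul_eq_mul]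
    rw [hq] at hpsd
    have h1 : c * ⟪y, y⟫ ≤ ⟪y, x⟫ := by linarith
    calc c * (‖y‖ * ‖y‖) = c * ⟪y, y⟫ := by rw [real_inner_self_eq_norm_mul_norm]
      _ ≤ ⟪y, x⟫ := h1
      _ ≤ ‖y‖ * ‖x‖ := real_inner_le_norm _ _
  have hyx : c * ‖y‖ ≤ ‖x‖ := by
    rcases eq_or_ne (‖y‖) 0 with h0 | h0
    · rw [h0, mul_zero]; positivity
    · have hpos : 0 < ‖y‖ := lt_of_le_of_ne (norm_nonneg _) (Ne.symm h0)
      nlinarith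
  have hnorm : ‖(toEuclideanLin.trans LinearMap.toContinuousLinearMap) M⁻¹ x‖ = ‖y‖ := by
    congr 1
  rw [hnorm, div_mul_eq_mul_div, le_div_iff₀ hc]
  linarith

/-- Probabilistic content of Theorem 3 of the paper: the probability that the
least-squares estimate of the open-loop gain matrix is within `ε` (in the
Euclidean-induced operator norm) is at least the probability that the Gramian is
`ζ·L`-excited and the noise-Gramian bound is below `ε`. -/
theorem ls_attack_deception_lower_bound_vector
    {Ω : Type*} [MeasurableSpace Ω] (P : Measure Ω) [IsProbabilityMeasure P]
    (n L : ℕ) (hn : 1 ≤ n) (hL : 2 ≤ L) (ζ ε : ℝ) (hζ : 0 < ζ) (hε : 0 < ε)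
    (A : Matrix (Fin n) (Fin n) ℝ) (X U W : ℕ → Ω → Fin n → ℝ)
    (hdyn : ∀ᵐ ω ∂P, ∀ k, 1 ≤ k → k ≤ L - 1 →
      X (k + 1) ω = A *ᵥ X k ω + U k ω + W k ω)
    (Ahat : Ω → Matrix (Fin n) (Fin n) ℝ)
    (hAhat : ∀ ω, Ahat ω =
      if (∑ k ∈ Icc 1 (L - 1), vecMulVec (X k ω) (X k ω)).det ≠ 0 then
        (∑ k ∈ Icc 1 (L - 1), vecMulVec (X (k + 1) ω - U k ω) (X k ω))
          * (∑ k ∈ Icc 1 (L - 1), vecMulVec (X k ω) (X k ω))⁻¹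
      else 0) :
    P ({ω | ((∑ k ∈ Icc 1 (L - 1), vecMulVec (X k ω) (X k ω))
            - (ζ * L) • (1 : Matrix (Fin n) (Fin n) ℝ)).PosSemidef}
        ∩ {ω | (1 / (ζ * L)) * ∑ k ∈ Icc 1 (L - 1), ‖vecMulVec (W k ω) (X k ω)‖ < ε})
      ≤ P {ω | ‖Ahat ω - A‖ < ε} := by
  apply measure_mono_ae
  filter_upwards [hdyn] with ω hω
  rintro ⟨hG, hS⟩
  simp only [Set.mem_setOf_eq] at hG hS ⊢
  set G : Matrix (Fin n) (Fin n) ℝ := ∑ k ∈ Icc 1 (L - 1), vecMulVec (X k ω) (X k ω) with hGdef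
  set S : Matrix (Fin n) (Fin n) ℝ := ∑ k ∈ Icc 1 (L - 1), vecMulVec (W k ω) (X k ω) with hSdef
  have hLpos : (0 : ℝ) < L := by
    have : (2 : ℝ) ≤ (L : ℝ) := by exact_mod_cast hL
    linarith
  have hζL : 0 < ζ * L := mul_pos hζ hLpos
  obtain ⟨hGpd, hGinv⟩ := inv_opNorm_le_of_shift_psd hζL hG
  have hdet : G.det ≠ 0 := hGpd.det_pos.ne'
  have hsum : ∑ k ∈ Icc 1 (L - 1), vecMulVec (X (k + 1) ω - U k ω) (X k ω)
      = A * G + S := by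
    rw [hGdef, Finset.mul_sum, hSdef, ← Finset.sum_add_distrib]
    refine Finset.sum_congr rfl fun k hk => ?_
    obtain ⟨hk1, hk2⟩ := Finset.mem_Icc.mp hk
    have hXk := hω k hk1 hk2
    have : X (k + 1) ω - U k ω = A *ᵥ X k ω + W k ω := by
      rw [hXk]; abel
    rw [this, vecMulVec_add_left_s14, vecMulVec_mulVec_left]
  have hA : Ahat ω - A = S * G⁻¹ := by
    rw [hAhat ω, if_pos hdet, hsum, add_mul, mul_assoc,
      Matrix.mul_nonsing_inv _ (Ne.isUnit hdet), mul_one]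
    abel
  have hSnorm : ‖S‖ ≤ ∑ k ∈ Icc 1 (L - 1), ‖vecMulVec (W k ω) (X k ω)‖ :=
    norm_sum_le _ _
  have hsum_nonneg : (0 : ℝ) ≤ ∑ k ∈ Icc 1 (L - 1), ‖vecMulVec (W k ω) (X k ω)‖ :=
    Finset.sum_nonneg fun _ _ => norm_nonneg _
  calc ‖Ahat ω - A‖ = ‖S * G⁻¹‖ := by rw [hA]
    _ ≤ ‖S‖ * ‖G⁻¹‖ := Matrix.l2_opNorm_mul _ _
    _ ≤ (∑ k ∈ Icc 1 (L - 1), ‖vecMulVec (W k ω) (X k ω)‖) * (1 / (ζ * L)) :=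
        mul_le_mul hSnorm hGinv (norm_nonneg _) hsum_nonneg
    _ = (1 / (ζ * L)) * ∑ k ∈ Icc 1 (L - 1), ‖vecMulVec (W k ω) (X k ω)‖ := mul_comm _ _
    _ < ε := hS
end
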